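/- Let L be a finite relational language. A hereditary abstract class K of L-structures is axiomatizable if and only if K = Forb(H) for some set H of finite L-structures. -/

import Mathlib

open FirstOrder FirstOrder.Language

/-- A bundled `L`-structure: a type together with an interpretation of `L`. -/
structure Struc (L : FirstOrder.Language) where
  carrier : Type
  [str : L.Structure carrier]

attribute [instance] Struc.str

namespace Struc

variable {L : FirstOrder.Language}

/-- `B` embeds into `A`, i.e. `A` has a substructure isomorphic to `B`. -/
def Embeds (B A : Struc L) : Prop :=
  Nonempty (B.carrier ↪[L] A.carrier)

/-- `B` and `A` are isomorphic `L`-structures. -/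
def Iso (B A : Struc L) : Prop :=
  Nonempty (B.carrier ≃[L] A.carrier)

/-- The class of `L`-structures having no substructure isomorphic to a member of `H`. -/
def Forb (H : Set (Struc L)) : Set (Struc L) :=
  {A | ∀ B ∈ H, ¬ Embeds B A}

/-- A class of structures is abstract when it is closed under isomorphism. -/
def IsoClosed (K : Set (Struc L)) : Prop :=
  ∀ A B : Struc L, Iso A B → A ∈ K → B ∈ K

/-- The bundled structure corresponding to a substructure of `A`. -/
def sub (A : Struc L) (S : L.Substructure A.carrier) : Struc L :=
  Struc.mk S

/-- A class of structures is hereditary when it is closed under substructures. -/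
def Hereditary (K : Set (Struc L)) : Prop :=
  ∀ A ∈ K, ∀ S : L.Substructure A.carrier, A.sub S ∈ K

end Struc

/-- A universal (∀-) sentence: a universally quantified quantifier-free formula. -/
def IsUniversalSentence {L : FirstOrder.Language} (φ : L.Sentence) : Prop :=
  ∃ (n : ℕ) (ψ : L.BoundedFormula Empty n), ψ.IsQF ∧ φ = ψ.alls

/-- An existential (∃-) sentence: an existentially quantified quantifier-free formula. -/
def IsExistentialSentence {L : FirstOrder.Language} (φ : L.Sentence) : Prop :=
  ∃ (n : ℕ) (ψ : L.BoundedFormula Empty n), ψ.IsQF ∧ φ = ψ.exs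


section EmbedSentence

variable {L : FirstOrder.Language} [L.IsRelational] [Finite (Σ n, L.Relations n)]
variable (β : Type) [L.Structure β] [Finite β]

open Classical in
noncomputable def embedFormula : L.Formula β :=
  letI := Fintype.ofFinite β
  letI := Fintype.ofFinite (Σ n, L.Relations n)
  BoundedFormula.iInf (fun p : β × β =>
      if p.1 = p.2 then ⊤ else ∼(Term.equal (Term.var p.1) (Term.var p.2))) ⊓
  BoundedFormula.iInf (fun q : (Σ p : Σ n, L.Relations n, Fin p.1 → β) =>
      if Structure.RelMap q.1.2 q.2 then Relations.formula q.1.2 (fun i => Term.var (q.2 i))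
      else ∼(Relations.formula q.1.2 (fun i => Term.var (q.2 i))))

theorem realize_embedFormula {M : Type*} [L.Structure M] {v : β → M} :
    (embedFormula β (L := L)).Realize v ↔
      Function.Injective v ∧ ∀ (n : ℕ) (R : L.Relations n) (x : Fin n → β),
        Structure.RelMap R (v ∘ x) ↔ Structure.RelMap R x := by
  letI := Fintype.ofFinite β
  letI := Fintype.ofFinite (Σ n, L.Relations n)
  have : (embedFormula β (L := L)).Realize v ↔
      BoundedFormula.Realize (embedFormula β (L := L)) v (default : Fin 0 → M) := Iff.rfl
  rw [this, embedFormula]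
  simp only [BoundedFormula.realize_inf, BoundedFormula.realize_iInf, Finset.mem_univ,
    true_implies]
  constructor
  · rintro ⟨h1, h2⟩
    refine ⟨fun a b hab => ?_, fun n R x => ?_⟩
    · by_contra hne
      have h := h1 (a, b)
      rw [if_neg hne] at h
      simp only [BoundedFormula.realize_not] at h
      exact h (by simp [Term.equal, Term.bdEqual, BoundedFormula.Realize, hab])
    · have h := h2 ⟨⟨n, R⟩, x⟩
      by_cases hR : Structure.RelMap R x
      · rw [if_pos hR] at h
        simp only [Relations.formula, BoundedFormula.realize_relabel,
          BoundedFormula.realize_rel] at h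
        constructor
        · intro; exact hR
        · intro _
          exact h
      · rw [if_neg hR] at h
        simp only [BoundedFormula.realize_not] at h
        constructor
        · intro hvx
          exfalso
          apply h
          simp only [Relations.formula, BoundedFormula.realize_relabel,
            BoundedFormula.realize_rel]
          exact hvx
        · intro hx; exact absurd hx hR
  · rintro ⟨h1, h2⟩
    constructor
    · intro p
      by_cases hp : p.1 = p.2
      · rw [if_pos hp]; exact BoundedFormula.realize_top.2 trivial
      · rw [if_neg hp]
        simp only [BoundedFormula.realize_not]
        intro h
        apply hp
        apply h1
        simpa [Term.equal, Term.bdEqual, BoundedFormula.Realize] using h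
    · intro q
      by_cases hR : Structure.RelMap q.1.2 q.2
      · rw [if_pos hR]
        simp only [Relations.formula, BoundedFormula.realize_relabel,
          BoundedFormula.realize_rel]
        have := (h2 q.1.1 q.1.2 q.2).2 hR
        exact this
      · rw [if_neg hR]
        simp only [BoundedFormula.realize_not, Relations.formula,
          BoundedFormula.realize_relabel, BoundedFormula.realize_rel]
        intro h
        apply hR
        apply (h2 q.1.1 q.1.2 q.2).1
        exact h

noncomputable def embedSentence : L.Sentence :=
  ((embedFormula β).relabel (Sum.inr : β → Empty ⊕ β)).iExs β

theorem realize_embedSentence {M : Type*} [L.Structure M] :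
    (M ⊨ embedSentence β (L := L)) ↔ Nonempty (β ↪[L] M) := by
  have h0 : (M ⊨ embedSentence β (L := L)) ↔
      Formula.Realize (embedSentence β (L := L)) (default : Empty → M) := Iff.rfl
  rw [h0, embedSentence, Formula.realize_iExs]
  simp only [Formula.realize_relabel, Sum.elim_comp_inr]
  constructor
  · rintro ⟨i, hi⟩
    obtain ⟨hinj, hrel⟩ := (realize_embedFormula β).1 hi
    exact ⟨⟨⟨i, hinj⟩, fun {n} f _ => isEmptyElim f, fun {n} R x => hrel n R x⟩⟩
  · rintro ⟨g⟩
    exact ⟨g, (realize_embedFormula β).2 ⟨g.injective, fun n R x => g.map_rel R x⟩⟩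

end EmbedSentence

section Diagram

variable {L : FirstOrder.Language} [L.IsRelational] (α : Type) [L.Structure α]

def neqSent (a b : α) : L[[α]].Sentence :=
  ∼(Term.equal (Constants.term (L.con a)) (Constants.term (L.con b)))

open Classical in
noncomputable def relSent {n : ℕ} (R : L.Relations n) (x : Fin n → α) : L[[α]].Sentence :=
  if Structure.RelMap R x
  then Relations.formula ((L.lhomWithConstants α).onRelation R) (fun i => Constants.term (L.con (x i)))
  else ∼(Relations.formula ((L.lhomWithConstants α).onRelation R) (fun i => Constants.term (L.con (x i))))

noncomputable def diagTheory : L[[α]].Theory :=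
  {σ | ∃ a b : α, a ≠ b ∧ σ = neqSent α a b} ∪
    {σ | ∃ (n : ℕ) (R : L.Relations n) (x : Fin n → α), σ = relSent α R x}

theorem realize_neqSent {M : Type*} [L[[α]].Structure M] {a b : α} :
    Sentence.Realize M (neqSent (L := L) α a b) ↔
      ((L.con a : L[[α]].Constants) : M) ≠ ((L.con b : L[[α]].Constants) : M) := by
  simp [neqSent, Sentence.Realize, Formula.realize_not, Formula.realize_equal,
    Term.realize_constants]

theorem realize_relSent {M : Type*} [L[[α]].Structure M] [L.Structure M]
    [(L.lhomWithConstants α).IsExpansionOn M] {n : ℕ} {R : L.Relations n} {x : Fin n → α} :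
    Sentence.Realize M (relSent (L := L) α R x) ↔
      (Structure.RelMap (M := M) R (fun i => ((L.con (x i) : L[[α]].Constants) : M)) ↔
        Structure.RelMap R x) := by
  by_cases hR : Structure.RelMap R x
  · rw [relSent, if_pos hR]
    simp only [Sentence.Realize, Formula.realize_rel, Term.realize_constants,
      LHom.map_onRelation]
    exact ⟨fun h => iff_of_true h hR, fun h => h.2 hR⟩
  · rw [relSent, if_neg hR]
    simp only [Sentence.Realize, Formula.realize_not, Formula.realize_rel,
      Term.realize_constants, LHom.map_onRelation]
    exact ⟨fun h => iff_of_false h hR, fun h hc => hR (h.1 hc)⟩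

theorem diag_support (σ : L[[α]].Sentence) (h : σ ∈ diagTheory α) :
    ∃ s : Finset α,
      (∃ a b : α, a ≠ b ∧ a ∈ s ∧ b ∈ s ∧ σ = neqSent α a b) ∨
      (∃ (n : ℕ) (R : L.Relations n) (x : Fin n → α), (∀ i, x i ∈ s) ∧ σ = relSent α R x) := by
  classical
  rcases h with ⟨a, b, hab, rfl⟩ | ⟨n, R, x, rfl⟩
  · exact ⟨{a, b}, Or.inl ⟨a, b, hab, by simp, by simp, rfl⟩⟩
  · exact ⟨Finset.image x Finset.univ, Or.inr ⟨n, R, x,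
      fun i => Finset.mem_image_of_mem x (Finset.mem_univ i), rfl⟩⟩

theorem diag_embedding {M : Type*} [L[[α]].Structure M] [L.Structure M]
    [(L.lhomWithConstants α).IsExpansionOn M]
    (h : ∀ σ : L[[α]].Sentence, σ ∈ diagTheory α → Sentence.Realize M σ) :
    ∃ g : α ↪[L] M, ∀ a : α, g a = ((L.con a : L[[α]].Constants) : M) := by
  have hinj : Function.Injective (fun a : α => ((L.con a : L[[α]].Constants) : M)) := by
    intro a b hab
    by_contra hne
    have hs := h (neqSent α a b) (Or.inl ⟨a, b, hne, rfl⟩)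
    simp only [neqSent, Sentence.Realize, Formula.realize_not, Formula.realize_equal,
      Term.realize_constants] at hs
    exact hs hab
  have hrel : ∀ (n : ℕ) (R : L.Relations n) (x : Fin n → α),
      Structure.RelMap (M := M) R (fun i => ((L.con (x i) : L[[α]].Constants) : M)) ↔
        Structure.RelMap R x := by
    intro n R x
    have hs := h (relSent α R x) (Or.inr ⟨n, R, x, rfl⟩)
    by_cases hR : Structure.RelMap R x
    · rw [relSent, if_pos hR] at hs
      simp only [Sentence.Realize, Formula.realize_rel, Term.realize_constants,
        LHom.map_onRelation] at hs
      exact iff_of_true hs hR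
    · rw [relSent, if_neg hR] at hs
      simp only [Sentence.Realize, Formula.realize_not, Formula.realize_rel,
        Term.realize_constants, LHom.map_onRelation] at hs
      exact iff_of_false hs hR
  exact ⟨⟨⟨fun a => ((L.con a : L[[α]].Constants) : M), hinj⟩,
    fun {n} f _ => isEmptyElim f, fun {n} R x => hrel n R x⟩, fun a => rfl⟩

end Diagram

theorem card_le_aleph0_of_finite {L : FirstOrder.Language} [L.IsRelational]
    [Finite (Σ n, L.Relations n)] : L.card ≤ Cardinal.aleph0 := by
  have h1 : Countable (Σ n, L.Functions n) := by
    have : ∀ n, IsEmpty (L.Functions n) := fun n => inferInstance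
    exact ⟨⟨fun _ => 0, fun x => (this x.1).elim x.2⟩⟩
  have h2 : Countable (Σ n, L.Relations n) := Finite.to_countable
  have : Countable L.Symbols := by
    unfold Language.Symbols
    infer_instance
  exact Cardinal.mk_le_aleph0

open Struc Cardinal in
theorem main_compactness {L : FirstOrder.Language} [L.IsRelational]
    [Finite (Σ n, L.Relations n)] (K : Set (Struc L))
    (hiso : IsoClosed K) (hher : Hereditary K) (T : L.Theory)
    (hT : ∀ A : Struc L, A ∈ K ↔ A.carrier ⊨ T) (A : Struc L)
    (hsubK : ∀ S : L.Substructure A.carrier, Finite S → A.sub S ∈ K)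
    [hinf : Infinite A.carrier] : A.carrier ⊨ T := by
  classical
  obtain ⟨a₀⟩ := (inferInstance : Nonempty A.carrier)
  have h1 : ℵ₀ ≤ #A.carrier := Cardinal.infinite_iff.1 hinf
  have hsat : (((L.lhomWithConstants A.carrier).onTheory T) ∪ diagTheory A.carrier).IsSatisfiable := by
    rw [Theory.isSatisfiable_iff_isFinitelySatisfiable]
    intro T0 hT0
    choose f hf using diag_support (L := L) A.carrier
    set F : L[[A.carrier]].Sentence → Finset A.carrier :=
      fun σ => if h : σ ∈ diagTheory A.carrier then f σ h else ∅ with hF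
    set s0 : Finset A.carrier := insert a₀ (T0.biUnion F) with hs0
    set Sub : L.Substructure A.carrier := Substructure.closure L (↑s0 : Set A.carrier) with hSub
    have hmem : ∀ a ∈ s0, a ∈ Sub := fun a ha => Substructure.subset_closure ha
    have h₀ : a₀ ∈ Sub := hmem a₀ (Finset.mem_insert_self _ _)
    have hSubfin : Finite Sub := by
      have heq : (Sub : Set A.carrier) = (↑s0 : Set A.carrier) := by
        rw [hSub, Substructure.closure_eq_of_isRelational]
      have hf2 : ((Sub : Set A.carrier)).Finite := heq ▸ s0.finite_toSet
      exact hf2.to_subtype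
    set cS : A.carrier → Sub := fun a => if h : a ∈ Sub then ⟨a, h⟩ else ⟨a₀, h₀⟩ with hcS
    letI : (constantsOn A.carrier).Structure Sub := constantsOn.structure cS
    haveI : Nonempty Sub := ⟨⟨a₀, h₀⟩⟩
    haveI hmodT : (Sub : Type _) ⊨ T := (hT (A.sub Sub)).1 (hsubK Sub hSubfin)
    haveI hmodel : (Sub : Type _) ⊨ (↑T0 : L[[A.carrier]].Theory) := by
      rw [Theory.model_iff]
      intro σ hσ
      rcases hT0 hσ with honT | hdiag
      · obtain ⟨φ, hφT, rfl⟩ := honT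
        rw [LHom.realize_onSentence]
        exact T.realize_sentence_of_mem hφT
      · have hFσ : ∀ a ∈ f σ hdiag, a ∈ Sub := by
          intro a ha
          apply hmem
          rw [hs0]
          refine Finset.mem_insert_of_mem (Finset.mem_biUnion.2 ⟨σ, hσ, ?_⟩)
          rw [hF]
          simpa [dif_pos hdiag] using ha
        rcases hf σ hdiag with ⟨a, b, hab, haf, hbf, heq⟩ | ⟨n, R, x, hxf, heq⟩
        · rw [heq, realize_neqSent]
          have ha : a ∈ Sub := hFσ a haf
          have hb : b ∈ Sub := hFσ b hbf
          have hca : ((L.con a : L[[A.carrier]].Constants) : Sub) = cS a := rfl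
          have hcb : ((L.con b : L[[A.carrier]].Constants) : Sub) = cS b := rfl
          rw [hca, hcb, hcS]
          simp only [dif_pos ha, dif_pos hb]
          intro hcon
          exact hab (congrArg Subtype.val hcon)
        · rw [heq, realize_relSent]
          have hx : ∀ i, x i ∈ Sub := fun i => hFσ _ (hxf i)
          have hcx : ∀ i, ((L.con (x i) : L[[A.carrier]].Constants) : Sub) = ⟨x i, hx i⟩ := by
            intro i
            have hc0 : ((L.con (x i) : L[[A.carrier]].Constants) : Sub) = cS (x i) := rfl
            rw [hc0, hcS]
            simp only [dif_pos (hx i)]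
          rw [show (fun i => ((L.con (x i) : L[[A.carrier]].Constants) : Sub)) =
            (fun i => (⟨x i, hx i⟩ : Sub)) from funext hcx]
          exact Iff.rfl
    exact Theory.Model.isSatisfiable Sub
  obtain ⟨M0⟩ := hsat
  letI : L.Structure M0 := (L.lhomWithConstants A.carrier).reduct M0
  haveI : (L.lhomWithConstants A.carrier).IsExpansionOn M0 :=
    LHom.isExpansionOn_reduct (L.lhomWithConstants A.carrier) M0
  obtain ⟨g, -⟩ := diag_embedding (L := L) A.carrier (M := M0) (fun σ hσ =>
    Theory.realize_sentence_of_mem (((L.lhomWithConstants A.carrier).onTheory T) ∪ diagTheory A.carrier)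
      (Set.mem_union_right _ hσ))
  obtain ⟨S, hSr, hScard⟩ := exists_elementarySubstructure_card_eq (L := L[[A.carrier]]) (M := M0)
    (Set.range g) #A.carrier h1 Cardinal.mk_range_le_lift
    (by
      rw [card_withConstants, Cardinal.lift_add, Cardinal.lift_lift, Cardinal.lift_lift]
      apply Cardinal.add_le_of_le
      · exact Cardinal.aleph0_le_lift.2 h1
      · refine le_trans (Cardinal.lift_le.2 card_le_aleph0_of_finite) ?_
        rw [Cardinal.lift_aleph0]
        exact Cardinal.aleph0_le_lift.2 h1
      · exact le_rfl)
    (Cardinal.lift_mk_le'.2 ⟨⟨g, g.injective⟩⟩)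
  obtain ⟨e⟩ := Cardinal.lift_mk_eq'.1 hScard
  letI : L.Structure S := (L.lhomWithConstants A.carrier).reduct S
  haveI : (M0 : Type _) ⊨ ((L.lhomWithConstants A.carrier).onTheory T) ∪ diagTheory A.carrier :=
    M0.is_model
  haveI : (L.lhomWithConstants A.carrier).IsExpansionOn S :=
    LHom.isExpansionOn_reduct (L.lhomWithConstants A.carrier) S
  haveI hSmod' : (S : Type _) ⊨ ((L.lhomWithConstants A.carrier).onTheory T) ∪ diagTheory A.carrier :=
    ElementarySubstructure.theory_model
  have hSmodT : (S : Type _) ⊨ T :=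
    (LHom.onTheory_model _ _).1 (hSmod'.mono Set.subset_union_left)
  haveI : Small.{0} (S : Type _) := small_map e
  letI : L.Structure (Shrink.{0} S) := @Equiv.inducedStructure L S _ _ (equivShrink S)
  let N : Struc L := Struc.mk (Shrink.{0} S)
  let eqv : (S : Type _) ≃[L] Shrink.{0} S := @Equiv.inducedStructureEquiv L S _ _ (equivShrink S)
  haveI hST : (S : Type _) ⊨ T := hSmodT
  haveI hNmod : (Shrink.{0} S) ⊨ T := StrongHomClass.theory_model eqv
  have hNK : N ∈ K := (hT N).2 hNmod
  let gS : A.carrier ↪[L] S :=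
    ⟨⟨fun a => ⟨g a, hSr ⟨a, rfl⟩⟩, fun a b hab => g.injective (congrArg Subtype.val hab)⟩,
      fun {n} fn _ => isEmptyElim fn, fun {n} R x => g.map_rel' R x⟩
  let embN : A.carrier ↪[L] Shrink.{0} S := eqv.toEmbedding.comp gS
  exact (hT A).1 (hiso (N.sub embN.toHom.range) A ⟨embN.equivRange.symm⟩
    (hher N hNK embN.toHom.range))

open Struc in
/-- Over a finite relational language, a hereditary abstract class `K` of
`L`-structures is axiomatizable iff `K = Forb H` for some set `H` of finite `L`-structures. -/
theorem statement7 {L : FirstOrder.Language} [L.IsRelational]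
    [Finite (Σ n, L.Relations n)] (K : Set (Struc L))
    (hiso : IsoClosed K) (hher : Hereditary K) :
    (∃ T : L.Theory, ∀ A : Struc L, A ∈ K ↔ A.carrier ⊨ T) ↔
      ∃ H : Set (Struc L), (∀ B ∈ H, Finite B.carrier) ∧ K = Forb H := by
  classical
  constructor
  · rintro ⟨T, hT⟩
    refine ⟨{B | Finite B.carrier ∧ B ∉ K}, fun B hB => hB.1, ?_⟩
    apply Set.eq_of_subset_of_subset
    · rintro A hA B hB ⟨g⟩
      exact hB.2 (hiso (A.sub g.toHom.range) B ⟨g.equivRange.symm⟩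
        (hher A hA g.toHom.range))
    · intro A hA
      have hsubK : ∀ S : L.Substructure A.carrier, Finite S → A.sub S ∈ K := by
        intro S hS
        by_contra hn
        exact hA (A.sub S) ⟨hS, hn⟩ ⟨S.subtype⟩
      rw [hT]
      by_cases hfinA : Finite A.carrier
      · haveI := hfinA
        exact (hT A).1 (hiso (A.sub ⊤) A ⟨Substructure.topEquiv⟩ (hsubK ⊤ inferInstance))
      · rw [not_finite_iff_infinite] at hfinA
        haveI := hfinA
        exact main_compactness K hiso hher T hT A hsubK
  · rintro ⟨H, hfin, rfl⟩
    refine ⟨{σ | ∃ B ∈ H, ∃ _h : Finite B.carrier, σ = ∼(embedSentence B.carrier)}, fun A => ?_⟩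
    rw [Theory.model_iff]
    constructor
    · rintro hA σ ⟨B, hB, hfB, rfl⟩
      rw [Sentence.realize_not]
      intro hemb
      exact hA B hB ((realize_embedSentence B.carrier).1 hemb)
    · intro h B hB hemb
      haveI := hfin B hB
      have hB' := h _ ⟨B, hB, hfin B hB, rfl⟩
      rw [Sentence.realize_not] at hB'
      exact hB' ((realize_embedSentence B.carrier).2 hemb)
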